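/- Let A be a Young function attaining only finite values on [0,∞), and let 1 ≤ q < p < ∞. If ∫_c^∞ (t^p / A(t))^{q/(p−q)} dt/t < ∞ for some c > 0, then lim_{t→∞} t^p / A(t) = 0. -/

import Mathlib

open MeasureTheory Filter Set ENNReal

noncomputable section

/-- A Young function: a convex, non-decreasing, left-continuous function
`A : [0,∞] → [0,∞]` with `A(0) = 0`, `A(0+) = 0` and `A(∞) = ∞`. -/
structure YoungFunction where
  toFun : ℝ≥0∞ → ℝ≥0∞
  map_zero : toFun 0 = 0
  tendsto_zero : Filter.Tendsto toFun (nhdsWithin 0 (Set.Ioi 0)) (nhds 0)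
  mono : Monotone toFun
  convex' : ∀ s t c : ℝ≥0∞, c ≤ 1 →
    toFun (c * s + (1 - c) * t) ≤ c * toFun s + (1 - c) * toFun t
  left_continuous : ∀ t : ℝ≥0∞, 0 < t → toFun t = ⨆ s ∈ Set.Iio t, toFun s
  map_top : toFun ⊤ = ⊤

/-- Left-continuous inverse of a non-decreasing function `F : [0,∞] → [0,∞]`:
`F⁻¹(t) = inf {τ ≥ 0 : F(τ) ≥ t}`. -/
def leftInvE (F : ℝ≥0∞ → ℝ≥0∞) (t : ℝ≥0∞) : ℝ≥0∞ :=
  sInf {τ : ℝ≥0∞ | t ≤ F τ}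

/-- `a` is the right-continuous derivative of the Young function `A`:
`a` is non-decreasing, right-continuous, `a(∞) = ∞`, and
`A(t) = ∫₀ᵗ a(s) ds` for all finite `t ≥ 0`. -/
def IsYoungDerivative (A : YoungFunction) (a : ℝ≥0∞ → ℝ≥0∞) : Prop :=
  Monotone a ∧ a ⊤ = ⊤ ∧
    (∀ t : ℝ≥0∞, t ≠ ⊤ → Filter.Tendsto a (nhdsWithin t (Set.Ioi t)) (nhds (a t))) ∧
    ∀ t : ℝ, 0 ≤ t →
      A.toFun (ENNReal.ofReal t) = ∫⁻ s in Set.Ioc (0:ℝ) t, a (ENNReal.ofReal s)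

/-- The Young conjugate `B̃(t) = sup {s·t − B(s) : s ∈ [0,∞]}`. -/
def youngConj (A : YoungFunction) (t : ℝ≥0∞) : ℝ≥0∞ :=
  ⨆ s : ℝ≥0∞, s * t - A.toFun s

variable {R : Type*} [MeasurableSpace R]

/-- The distribution function `f₊(λ) = μ({x : |f(x)| > λ})`. -/
def distFn (μ : Measure R) (f : R → ℝ) (lam : ℝ≥0∞) : ℝ≥0∞ :=
  μ {x | lam < ENNReal.ofReal |f x|}

/-- The non-increasing rearrangement `f*(t) = inf {λ ≥ 0 : f₊(λ) ≤ t}`. -/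
def rearr (μ : Measure R) (f : R → ℝ) (t : ℝ≥0∞) : ℝ≥0∞ :=
  sInf {lam : ℝ≥0∞ | distFn μ f lam ≤ t}

/-- The Lorentz functional `‖f‖_{p,q}` for `p, q ∈ (0,∞]`. -/
def lorentzNorm (μ : Measure R) (p q : ℝ≥0∞) (f : R → ℝ) : ℝ≥0∞ :=
  if q = ⊤ then
    ⨆ t : Set.Ioi (0:ℝ), ENNReal.ofReal t.1 ^ (p⁻¹).toReal * rearr μ f (ENNReal.ofReal t.1)
  else
    (∫⁻ t in Set.Ioi (0:ℝ),
        (ENNReal.ofReal t ^ (p⁻¹).toReal * rearr μ f (ENNReal.ofReal t)) ^ q.toReal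
          / ENNReal.ofReal t) ^ (q⁻¹).toReal

/-- The Luxemburg norm `‖f‖_A = inf {λ > 0 : ∫ A(|f|/λ) dμ ≤ 1}`. -/
def luxNorm (μ : Measure R) (A : YoungFunction) (f : R → ℝ) : ℝ≥0∞ :=
  sInf {lam : ℝ≥0∞ | 0 < lam ∧ ∫⁻ x, A.toFun (ENNReal.ofReal |f x| / lam) ∂μ ≤ 1}

/-- The measure `μ` is non-atomic: every set of positive measure has a subset
of strictly smaller positive measure. -/
def NonAtomic (μ : Measure R) : Prop :=
  ∀ s : Set R, MeasurableSet s → 0 < μ s →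
    ∃ t, t ⊆ s ∧ MeasurableSet t ∧ 0 < μ t ∧ μ t < μ s

/-- The almost-compact embedding `X ↪* Y`, for (quasi)norm functionals `NX`, `NY`:
`X ⊂ Y` and for every sequence of measurable sets `Eₙ` whose characteristic
functions tend to `0` a.e., `sup_{‖f‖_X ≤ 1} ‖f χ_{Eₙ}‖_Y → 0`. -/
def AlmostCompactEmbedding (μ : Measure R) (NX NY : (R → ℝ) → ℝ≥0∞) : Prop :=
  (∀ f : R → ℝ, Measurable f → NX f < ⊤ → NY f < ⊤) ∧
    ∀ E : ℕ → Set R, (∀ n, MeasurableSet (E n)) →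
      (∀ᵐ x ∂μ, Filter.Tendsto (fun n => (E n).indicator (fun _ => (1:ℝ)) x)
        Filter.atTop (nhds 0)) →
      Filter.Tendsto
        (fun n => ⨆ f : {f : R → ℝ // Measurable f ∧ NX f ≤ 1},
          NY ((E n).indicator f.1)) Filter.atTop (nhds 0)

/-- The continuous embedding `X ↪ Y`: there is `C > 0` with `‖f‖_Y ≤ C ‖f‖_X`. -/
def NormEmbedding (μ : Measure R) (NX NY : (R → ℝ) → ℝ≥0∞) : Prop :=
  ∃ C : ℝ, 0 < C ∧ ∀ f : R → ℝ, Measurable f → NY f ≤ ENNReal.ofReal C * NX f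
/-- If `A` is a finite-valued Young function, `1 ≤ q < p < ∞`,
and `∫_c^∞ (t^p/A(t))^{q/(p-q)} dt/t < ∞` for some `c > 0`,
then `lim_{t→∞} t^p/A(t) = 0`. -/
theorem tendsto_rpow_div_young_of_integral
    (A : YoungFunction) (hfin : ∀ t : ℝ≥0∞, t ≠ ⊤ → A.toFun t ≠ ⊤)
    (p q : ℝ) (hq : 1 ≤ q) (hqp : q < p)
    (h : ∃ c : ℝ, 0 < c ∧
      ∫⁻ t in Set.Ioi c,
        (ENNReal.ofReal t ^ p / A.toFun (ENNReal.ofReal t)) ^ (q / (p - q))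
          / ENNReal.ofReal t < ⊤) :
    Filter.Tendsto (fun t : ℝ => ENNReal.ofReal t ^ p / A.toFun (ENNReal.ofReal t))
      Filter.atTop (nhds 0) := by

  obtain ⟨c, hc, hint⟩ := h
  set r : ℝ := q / (p - q) with hr
  have hr0 : 0 < r := div_pos (by linarith) (by linarith)
  have hp1 : (0:ℝ) ≤ p - 1 := by linarith
  set φ : ℝ → ℝ≥0∞ := fun t => ENNReal.ofReal t ^ p / A.toFun (ENNReal.ofReal t) with hφ
  set g : ℝ → ℝ≥0∞ := fun s => φ s ^ r / ENNReal.ofReal s with hg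
  -- a point where A is positive
  have hex : ∃ s : ℝ≥0∞, s ≠ ⊤ ∧ 0 < A.toFun s := by
    by_contra h'
    push_neg at h'
    have h0 : ∀ s ∈ Set.Iio (⊤:ℝ≥0∞), A.toFun s = 0 := fun s hs =>
      le_antisymm (h' s hs.ne) zero_le
    have hlc := A.left_continuous ⊤ (by simp)
    rw [A.map_top] at hlc
    have : (⊤:ℝ≥0∞) = 0 := by
      rw [hlc]
      refine le_antisymm ?_ zero_le
      exact iSup_le fun s => iSup_le fun hs => (h0 s hs).le
    simp at this
  obtain ⟨s0, hs0top, hs0pos⟩ := hex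
  set T0 : ℝ := max (c + 1) (s0.toReal + 1) with hT0
  have hT0c : c + 1 ≤ T0 := le_max_left _ _
  have hT0pos : 0 < T0 := by
    have := le_max_right (c + 1) (s0.toReal + 1)
    have h1 : (0:ℝ) ≤ s0.toReal := ENNReal.toReal_nonneg
    linarith
  have hApos : ∀ t : ℝ, T0 ≤ t → 0 < A.toFun (ENNReal.ofReal t) := by
    intro t ht
    refine hs0pos.trans_le (A.mono ?_)
    calc s0 = ENNReal.ofReal s0.toReal := (ENNReal.ofReal_toReal hs0top).symm
      _ ≤ ENNReal.ofReal t := by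
          apply ENNReal.ofReal_le_ofReal
          have := le_max_right (c + 1) (s0.toReal + 1)
          linarith
  -- scaling property of Young functions
  have hscale : ∀ lam x : ℝ≥0∞, lam ≤ 1 → A.toFun (lam * x) ≤ lam * A.toFun x := by
    intro lam x hlam
    have := A.convex' x 0 lam hlam
    simpa [A.map_zero] using this
  -- cross inequality
  have hcross : ∀ s t : ℝ, 0 < s → s ≤ t →
      A.toFun (ENNReal.ofReal s) * ENNReal.ofReal t
        ≤ A.toFun (ENNReal.ofReal t) * ENNReal.ofReal s := by
    intro s t hs hst
    have ht : (0:ℝ) < t := hs.trans_le hst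
    have htne : ENNReal.ofReal t ≠ 0 := (ENNReal.ofReal_pos.mpr ht).ne'
    have httop : ENNReal.ofReal t ≠ ⊤ := ENNReal.ofReal_ne_top
    have hlam : ENNReal.ofReal s / ENNReal.ofReal t ≤ 1 :=
      ENNReal.div_le_of_le_mul (by simpa using ENNReal.ofReal_le_ofReal hst)
    have hmul : (ENNReal.ofReal s / ENNReal.ofReal t) * ENNReal.ofReal t = ENNReal.ofReal s :=
      ENNReal.div_mul_cancel htne httop
    calc A.toFun (ENNReal.ofReal s) * ENNReal.ofReal t
        = A.toFun ((ENNReal.ofReal s / ENNReal.ofReal t) * ENNReal.ofReal t)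
            * ENNReal.ofReal t := by rw [hmul]
      _ ≤ ((ENNReal.ofReal s / ENNReal.ofReal t) * A.toFun (ENNReal.ofReal t))
            * ENNReal.ofReal t := mul_le_mul_left (hscale _ _ hlam) _
      _ = A.toFun (ENNReal.ofReal t)
            * ((ENNReal.ofReal s / ENNReal.ofReal t) * ENNReal.ofReal t) := by ring
      _ = A.toFun (ENNReal.ofReal t) * ENNReal.ofReal s := by rw [hmul]
  set B : ℝ≥0∞ := (2 : ℝ≥0∞) ^ (p - 1) with hB
  have hB0 : B ≠ 0 := by
    simp [hB, ENNReal.rpow_eq_zero_iff]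
  have hBtop : B ≠ ⊤ := ENNReal.rpow_ne_top_of_nonneg hp1 (by norm_num)
  -- key pointwise inequality
  have hkey : ∀ t : ℝ, 2 * T0 ≤ t → ∀ s ∈ Set.Ioc (t/2) t, φ t ≤ B * φ s := by
    intro t ht s hsmem
    obtain ⟨hs1, hs2⟩ := hsmem
    have hspos : 0 < s := lt_of_le_of_lt (by linarith) hs1
    have htpos : 0 < t := lt_of_lt_of_le (by linarith) ht
    have hsT0 : T0 ≤ s := by nlinarith
    set a : ℝ≥0∞ := ENNReal.ofReal s with ha
    set b : ℝ≥0∞ := ENNReal.ofReal t with hb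
    set Ds : ℝ≥0∞ := A.toFun a with hDs
    set Dt : ℝ≥0∞ := A.toFun b with hDt
    have ha0 : a ≠ 0 := (ENNReal.ofReal_pos.mpr hspos).ne'
    have hatop : a ≠ ⊤ := ENNReal.ofReal_ne_top
    have hb0 : b ≠ 0 := (ENNReal.ofReal_pos.mpr htpos).ne'
    have hbtop : b ≠ ⊤ := ENNReal.ofReal_ne_top
    have hDs0 : Ds ≠ 0 := (hApos s hsT0).ne'
    have hDstop : Ds ≠ ⊤ := hfin _ hatop
    have hDt0 : Dt ≠ 0 := (hApos t (by linarith)).ne'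
    have hDttop : Dt ≠ ⊤ := hfin _ hbtop
    have hba : b ≤ 2 * a := by
      rw [ha, hb]
      calc ENNReal.ofReal t ≤ ENNReal.ofReal (2 * s) :=
            ENNReal.ofReal_le_ofReal (by linarith)
        _ = 2 * ENNReal.ofReal s := by
            rw [ENNReal.ofReal_mul (by norm_num)]; norm_num
    have hcr : Ds * b ≤ Dt * a := by
      have := hcross s t hspos hs2
      rw [← ha, ← hb, ← hDs, ← hDt] at this
      exact this
    have hbp : b ^ p = b ^ (p-1) * b := by
      have h1 : b ^ ((p-1) + 1) = b ^ (p-1) * b ^ (1:ℝ) := ENNReal.rpow_add _ _ hb0 hbtop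
      rw [sub_add_cancel] at h1
      rw [h1, ENNReal.rpow_one]
    have hap : a ^ p = a ^ (p-1) * a := by
      have h1 : a ^ ((p-1) + 1) = a ^ (p-1) * a ^ (1:ℝ) := ENNReal.rpow_add _ _ ha0 hatop
      rw [sub_add_cancel] at h1
      rw [h1, ENNReal.rpow_one]
    have M1 : b ^ p * Ds ≤ B * a ^ p * Dt := by
      calc b ^ p * Ds = b ^ (p-1) * (Ds * b) := by rw [hbp]; ring
        _ ≤ (2*a) ^ (p-1) * (Dt * a) :=
            mul_le_mul' (ENNReal.rpow_le_rpow hba hp1) hcr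
        _ = B * a ^ p * Dt := by
            rw [ENNReal.mul_rpow_of_nonneg _ _ hp1, hap, hB]; ring
    -- now convert to division form
    show b ^ p / Dt ≤ B * (a ^ p / Ds)
    rw [ENNReal.div_le_iff hDt0 hDttop, div_eq_mul_inv]
    have hbpd : b ^ p = b ^ p * Ds * Ds⁻¹ := by
      rw [mul_assoc, ENNReal.mul_inv_cancel hDs0 hDstop, mul_one]
    calc b ^ p = b ^ p * Ds * Ds⁻¹ := hbpd
      _ ≤ B * a ^ p * Dt * Ds⁻¹ := mul_le_mul_left M1 _
      _ = B * (a ^ p * Ds⁻¹) * Dt := by ring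
  -- the tail measure
  set ν : Measure ℝ := (volume.restrict (Set.Ioi c)).withDensity g with hν
  have hνapp : ∀ u : ℝ, c ≤ u → ν (Set.Ioi u) = ∫⁻ s in Set.Ioi u, g s := by
    intro u hu
    rw [hν, withDensity_apply _ measurableSet_Ioi,
      Measure.restrict_restrict measurableSet_Ioi,
      Set.inter_eq_self_of_subset_left (Set.Ioi_subset_Ioi hu)]
  have hνc : ν (Set.Ioi c) ≠ ⊤ := by
    rw [hνapp c le_rfl]
    exact hint.ne
  have htail : Tendsto (fun u : ℝ => ν (Set.Ioi u)) atTop (nhds 0) := by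
    have h1 : Tendsto (ν ∘ fun u : ℝ => Set.Ioi u) atTop
        (nhds (ν (⋂ u : ℝ, Set.Ioi u))) :=
      tendsto_measure_iInter_atTop (fun u => measurableSet_Ioi.nullMeasurableSet)
        (fun u v huv => Set.Ioi_subset_Ioi huv) ⟨c, hνc⟩
    have h2 : (⋂ u : ℝ, Set.Ioi u) = (∅ : Set ℝ) := by
      ext x
      simp only [Set.mem_iInter, Set.mem_Ioi, Set.mem_empty_iff_false, iff_false, not_forall,
        not_lt]
      exact ⟨x, le_rfl⟩
    rw [h2] at h1
    simpa [Function.comp_def] using h1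
  -- the main integral bound
  have hbound : ∀ t : ℝ, 2 * T0 ≤ t → (φ t / B) ^ r ≤ 2 * ν (Set.Ioi (t/2)) := by
    intro t ht
    have htpos : 0 < t := lt_of_lt_of_le (by linarith) ht
    have htne : ENNReal.ofReal t ≠ 0 := (ENNReal.ofReal_pos.mpr htpos).ne'
    have httop : ENNReal.ofReal t ≠ ⊤ := ENNReal.ofReal_ne_top
    have hc2 : c ≤ t / 2 := by
      have := hT0c
      linarith
    have hlow : ∀ s ∈ Set.Ioc (t/2) t,
        (φ t / B) ^ r / ENNReal.ofReal t ≤ g s := by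
      intro s hsmem
      have h1 : φ t / B ≤ φ s :=
        ENNReal.div_le_of_le_mul ((hkey t ht s hsmem).trans_eq (mul_comm _ _))
      have h2 : (φ t / B) ^ r ≤ φ s ^ r := ENNReal.rpow_le_rpow h1 hr0.le
      have h3 : ENNReal.ofReal s ≤ ENNReal.ofReal t :=
        ENNReal.ofReal_le_ofReal hsmem.2
      exact ENNReal.div_le_div h2 h3
    have hIoc : ∫⁻ s in Set.Ioc (t/2) t, ((φ t / B) ^ r / ENNReal.ofReal t) ∂volume
        ≤ ν (Set.Ioi (t/2)) := by
      calc ∫⁻ s in Set.Ioc (t/2) t, ((φ t / B) ^ r / ENNReal.ofReal t) ∂volume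
          ≤ ∫⁻ s in Set.Ioc (t/2) t, g s ∂volume :=
            setLIntegral_mono' measurableSet_Ioc hlow
        _ ≤ ∫⁻ s in Set.Ioi (t/2), g s ∂volume :=
            lintegral_mono_set Set.Ioc_subset_Ioi_self
        _ = ν (Set.Ioi (t/2)) := (hνapp _ hc2).symm
    rw [setLIntegral_const, Real.volume_Ioc] at hIoc
    have hmeas : ENNReal.ofReal (t - t/2) = ENNReal.ofReal t / 2 := by
      rw [show t - t/2 = t/2 by ring, ENNReal.ofReal_div_of_pos (by norm_num)]
      norm_num
    rw [hmeas] at hIoc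
    have hsimp : (φ t / B) ^ r / ENNReal.ofReal t * (ENNReal.ofReal t / 2)
        = (φ t / B) ^ r / 2 := by
      rw [div_eq_mul_inv, div_eq_mul_inv, div_eq_mul_inv, mul_assoc,
        show (ENNReal.ofReal t)⁻¹ * (ENNReal.ofReal t * 2⁻¹)
          = (ENNReal.ofReal t)⁻¹ * ENNReal.ofReal t * 2⁻¹ by ring,
        ENNReal.inv_mul_cancel htne httop, one_mul, div_eq_mul_inv]
    rw [hsimp] at hIoc
    rw [← ENNReal.div_le_iff' (by norm_num) (by norm_num)]
    exact hIoc
  -- conclude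
  have hXt : Tendsto (fun t : ℝ => (φ t / B) ^ r) atTop (nhds 0) := by
    have h2ν : Tendsto (fun t : ℝ => 2 * ν (Set.Ioi (t/2))) atTop (nhds 0) := by
      have hdiv : Tendsto (fun t : ℝ => t / 2) atTop atTop :=
        tendsto_id.atTop_div_const (by norm_num)
      have := (ENNReal.Tendsto.const_mul (htail.comp hdiv)
        (Or.inr (by norm_num : (2:ℝ≥0∞) ≠ ⊤)))
      simpa using this
    rw [ENNReal.tendsto_nhds_zero]
    intro ε hε
    have h1 : ∀ᶠ t : ℝ in atTop, 2 * ν (Set.Ioi (t/2)) ≤ ε :=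
      ENNReal.tendsto_nhds_zero.mp h2ν ε hε
    have h2 : ∀ᶠ t : ℝ in atTop, 2 * T0 ≤ t := eventually_ge_atTop _
    filter_upwards [h1, h2] with t ht1 ht2
    exact (hbound t ht2).trans ht1
  have hdivB : Tendsto (fun t : ℝ => φ t / B) atTop (nhds 0) := by
    have hcomp : Tendsto (fun t : ℝ => ((φ t / B) ^ r) ^ (1/r)) atTop
        (nhds ((0:ℝ≥0∞) ^ (1/r))) := hXt.ennrpow_const (1/r)
    have h0 : ((0:ℝ≥0∞)) ^ (1/r) = 0 := by
      rw [ENNReal.zero_rpow_of_pos (by positivity)]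
    rw [h0] at hcomp
    have heq : (fun t : ℝ => ((φ t / B) ^ r) ^ (1/r)) = fun t : ℝ => φ t / B := by
      funext t
      rw [← ENNReal.rpow_mul, mul_one_div, div_self hr0.ne', ENNReal.rpow_one]
    rwa [heq] at hcomp
  have hfinal : Tendsto (fun t : ℝ => φ t / B * B) atTop (nhds (0 * B)) :=
    ENNReal.Tendsto.mul_const hdivB (Or.inr hBtop)
  rw [zero_mul] at hfinal
  have heq2 : (fun t : ℝ => φ t / B * B) = φ := by
    funext t
    exact ENNReal.div_mul_cancel hB0 hBtop
  rwa [heq2] at hfinal
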